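/- Let Y be a real Banach space, X a real vector space, and h : X → Y a map satisfying ‖h(2x) − 16h(x)‖ ≤ ε for all x ∈ X and some ε ≥ 0. Then there exists a unique map Q : X → Y with Q(2x) = 16Q(x) for all x and ‖h(x) − Q(x)‖ ≤ ε/15 for all x ∈ X; Q is given by Q(x) = lim_{n→∞} h(2ⁿx)/16ⁿ. -/

import Mathlib

open Filter Topology

theorem stmt_14 {X Y : Type*} [AddCommGroup X] [Module ℝ X]
    [NormedAddCommGroup Y] [NormedSpace ℝ Y] [CompleteSpace Y]
    (h : X → Y) (ε : ℝ) (hε : 0 ≤ ε)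
    (hh : ∀ x : X, ‖h ((2:ℝ) • x) - (16:ℝ) • h x‖ ≤ ε) :
    ∃! Q : X → Y,
      (∀ x : X, Q ((2:ℝ) • x) = (16:ℝ) • Q x) ∧
      (∀ x : X, ‖h x - Q x‖ ≤ ε / 15) ∧
      (∀ x : X, Filter.Tendsto (fun n : ℕ => ((16:ℝ)^n)⁻¹ • h (((2:ℝ)^n) • x))
        Filter.atTop (nhds (Q x))) := by
  set a : ℕ → X → Y := fun n x => ((16:ℝ)^n)⁻¹ • h (((2:ℝ)^n) • x) with ha
  have hstep : ∀ (x : X) (n : ℕ), dist (a n x) (a (n+1) x) ≤ (ε/16) * (1/16)^n := by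
    intro x n
    have h1 : ((2:ℝ)^(n+1)) • x = (2:ℝ) • (((2:ℝ)^n) • x) := by
      rw [smul_smul, pow_succ, mul_comm]
    have h2 := hh (((2:ℝ)^n) • x)
    have key : a n x - a (n+1) x
        = ((16:ℝ)^(n+1))⁻¹ • ((16:ℝ) • h (((2:ℝ)^n) • x) - h (((2:ℝ)^(n+1)) • x)) := by
      simp only [ha, smul_sub, smul_smul]
      congr 2
      rw [pow_succ]
      field_simp
    rw [dist_eq_norm, key, norm_smul]
    have h3 : ‖(16:ℝ) • h (((2:ℝ)^n) • x) - h (((2:ℝ)^(n+1)) • x)‖ ≤ ε := by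
      rw [← norm_neg, neg_sub, h1]
      exact h2
    have h4 : ‖((16:ℝ)^(n+1))⁻¹‖ = (16:ℝ)⁻¹ * (1/16)^n := by
      rw [Real.norm_eq_abs, abs_of_pos (by positivity)]
      rw [pow_succ]
      field_simp
      rw [← mul_pow]; norm_num
    rw [h4]
    calc (16:ℝ)⁻¹ * (1/16)^n * ‖(16:ℝ) • h (((2:ℝ)^n) • x) - h (((2:ℝ)^(n+1)) • x)‖
        ≤ (16:ℝ)⁻¹ * (1/16)^n * ε := by
          apply mul_le_mul_of_nonneg_left h3 (by positivity)
      _ = (ε/16) * (1/16)^n := by ring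
  have hc : ∀ x : X, ∃ L : Y, Tendsto (fun n => a n x) atTop (nhds L) := by
    intro x
    exact cauchySeq_tendsto_of_complete
      (cauchySeq_of_le_geometric (1/16) (ε/16) (by norm_num) (hstep x))
  choose Q hQ using hc
  have ha0 : ∀ x : X, a 0 x = h x := by
    intro x; simp [ha]
  refine ⟨Q, ⟨?_, ?_, hQ⟩, ?_⟩
  · intro x
    have heq : ∀ n : ℕ, a n ((2:ℝ) • x) = (16:ℝ) • a (n+1) x := by
      intro n
      simp only [ha, smul_smul]
      rw [pow_succ, pow_succ]
      congr 1
      field_simp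
    have t1 : Tendsto (fun n => a n ((2:ℝ) • x)) atTop (nhds (Q ((2:ℝ) • x))) := hQ _
    have t2 : Tendsto (fun n => (16:ℝ) • a (n+1) x) atTop (nhds ((16:ℝ) • Q x)) :=
      ((hQ x).comp (tendsto_add_atTop_nat 1)).const_smul _
    exact tendsto_nhds_unique t1 (by simpa only [heq] using t2)
  · intro x
    have := dist_le_of_le_geometric_of_tendsto₀ (1/16) (ε/16) (by norm_num) (hstep x) (hQ x)
    rw [ha0 x, dist_eq_norm] at this
    calc ‖h x - Q x‖ ≤ (ε/16) / (1 - 1/16) := this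
      _ = ε / 15 := by ring
  · intro Q' ⟨_, _, h3⟩
    funext x
    exact tendsto_nhds_unique (h3 x) (hQ x)
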